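/- The eta quotient psi9(z) = η(z)^3 / η(9z)^3 has Fourier expansion beginning q^{-1} - 3 + 5q^2 - 7q^5 + ..., with no q^0-free terms of exponent 0 or 1 other than the constant -3 and vanishing q^1 coefficient. -/

import Mathlib

open Complex UpperHalfPlane

noncomputable def qq (z : ℂ) : ℂ := Complex.exp (2 * Real.pi * Complex.I * z)

noncomputable def dedekindEta (z : ℂ) : ℂ :=
  Complex.exp (Real.pi * Complex.I * z / 12) * ∏' n : ℕ, (1 - qq ((n + 1) * z))

noncomputable def psi9 (z : ℂ) : ℂ := dedekindEta z ^ 3 / dedekindEta (9 * z) ^ 3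

open Metric Filter Finset Topology

noncomputable def Lam (x : ℂ) : ℂ := ∑' n : ℕ, Complex.log (1 - x ^ (n + 1))
noncomputable def FF (x : ℂ) : ℂ := Complex.exp (3 * Lam x - 3 * Lam (x ^ 9))
noncomputable def PP (q : ℂ) : ℂ := 1 - 3*q + 5*q^3 - 7*q^6
noncomputable def AA (q : ℂ) : ℂ := (1-q)*(1-q^2)*(1-q^3)*(1-q^4)*(1-q^5)*(1-q^6)
noncomputable def BB (q : ℂ) : ℂ :=
  3 - 6*q - 6*q^2 + 18*q^3 + 9*q^4 + 9*q^5 - 12*q^6 - 6*q^7 - 32*q^8 - 24*q^9 + 18*q^10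
  + 30*q^11 + 45*q^12 + 15*q^13 + 32*q^14 - 66*q^15 - 78*q^16 - 39*q^17 - 9*q^18 + 54*q^19
  + 56*q^20 + 117*q^21 + 6*q^22 - 49*q^23 - 81*q^24 - 81*q^25 - 49*q^26 + 6*q^27 + 117*q^28
  + 56*q^29 + 54*q^30 - 9*q^31 - 39*q^32 - 78*q^33 - 66*q^34 + 32*q^35 + 15*q^36 + 45*q^37
  + 30*q^38 + 18*q^39 - 24*q^40 - 32*q^41 - 6*q^42 - 12*q^43 + 9*q^44 + 9*q^45 + 18*q^46
  - 6*q^47 - 6*q^48 + 3*q^49 - 7*q^50 + 5*q^53 - 3*q^55 + q^56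
noncomputable def RR (q : ℂ) : ℂ :=
  3 * (∑' n : ℕ, Complex.log (1 - q ^ (n + 6 + 1))) - 3 * Lam (q ^ 9)

lemma AA_cube (q : ℂ) : AA q ^ 3 = PP q + q^7 * BB q := by
  simp only [AA, PP, BB]; ring

lemma one_sub_ne {u : ℂ} (h : ‖u‖ < 1) : 1 - u ≠ 0 := by
  intro h0
  have : u = 1 := by linear_combination -h0
  rw [this] at h; simp at h

lemma norm_pow_succ_lt {x : ℂ} (hx : ‖x‖ < 1) (k : ℕ) : ‖x ^ (k+1)‖ < 1 := by
  rw [norm_pow]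
  exact pow_lt_one₀ (norm_nonneg x) hx (Nat.succ_ne_zero k)


lemma log_bound {u : ℂ} (h : ‖u‖ ≤ 1/2) : ‖Complex.log (1 - u)‖ ≤ (3/2) * ‖u‖ := by
  have := Complex.norm_log_one_add_half_le_self (z := -u) (by simpa using h)
  simpa [sub_eq_add_neg] using this

lemma summable_geom_shift {x : ℂ} (hx : ‖x‖ < 1) (m : ℕ) :
    Summable (fun n : ℕ => (3/2) * ‖x‖ ^ (n + m + 1)) := by
  have : Summable (fun n : ℕ => ‖x‖ ^ n) := summable_geometric_of_lt_one (norm_nonneg x) hx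
  have := ((summable_nat_add_iff (m + 1)).2 this).mul_left (3/2 : ℝ)
  exact this.congr (fun n => by ring_nf)

lemma norm_log_le {x : ℂ} (hx : ‖x‖ ≤ 1/2) (k : ℕ) :
    ‖Complex.log (1 - x ^ (k + 1))‖ ≤ (3/2) * ‖x‖ ^ (k + 1) := by
  have h1 : ‖x ^ (k+1)‖ ≤ 1/2 := by
    rw [norm_pow]
    calc ‖x‖ ^ (k+1) ≤ ‖x‖ ^ 1 := by
          apply pow_le_pow_of_le_one (norm_nonneg x) (hx.trans (by norm_num)) (by omega)
      _ ≤ 1/2 := by simpa using hx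
  simpa [norm_pow] using log_bound h1

lemma summable_log {x : ℂ} (hx : ‖x‖ < 1) (m : ℕ) :
    Summable (fun n : ℕ => Complex.log (1 - x ^ (n + m + 1))) := by
  have hx0 : 0 ≤ ‖x‖ := norm_nonneg x
  apply Summable.of_norm_bounded_eventually (g := fun n => (3/2) * ‖x‖ ^ (n + m + 1))
    (summable_geom_shift hx m)
  rw [Nat.cofinite_eq_atTop]
  have h2 : Tendsto (fun n : ℕ => ‖x‖ ^ (n + m + 1)) atTop (𝓝 0) := by
    have h3 := tendsto_pow_atTop_nhds_zero_of_lt_one hx0 hx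
    exact h3.comp (tendsto_add_atTop_nat (m + 1))
  filter_upwards [h2.eventually (eventually_le_nhds (by norm_num : (0:ℝ) < 1/2))] with n hn
  have h1 : ‖x ^ (n + m + 1)‖ ≤ 1/2 := by rwa [norm_pow]
  simpa [norm_pow] using log_bound h1

lemma summable_norm_log {x : ℂ} (hx : ‖x‖ < 1) (m : ℕ) :
    Summable (fun n : ℕ => ‖Complex.log (1 - x ^ (n + m + 1))‖) := by
  apply Summable.of_norm_bounded_eventually (g := fun n => (3/2) * ‖x‖ ^ (n + m + 1))
    (summable_geom_shift hx m)
  rw [Nat.cofinite_eq_atTop]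
  have h2 : Tendsto (fun n : ℕ => ‖x‖ ^ (n + m + 1)) atTop (𝓝 0) := by
    have h3 := tendsto_pow_atTop_nhds_zero_of_lt_one (norm_nonneg x) hx
    exact h3.comp (tendsto_add_atTop_nat (m + 1))
  filter_upwards [h2.eventually (eventually_le_nhds (by norm_num : (0:ℝ) < 1/2))] with n hn
  have h1 : ‖x ^ (n + m + 1)‖ ≤ 1/2 := by rwa [norm_pow]
  simpa [norm_pow] using log_bound h1

lemma tail_bound {q : ℂ} (h : ‖q‖ ≤ 1/2) (m : ℕ) :
    ‖∑' n : ℕ, Complex.log (1 - q ^ (n + m + 1))‖ ≤ 4 * ‖q‖ ^ (m + 1) := by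
  have hq1 : ‖q‖ < 1 := h.trans_lt (by norm_num)
  have h0 : 0 ≤ ‖q‖ := norm_nonneg q
  calc ‖∑' n : ℕ, Complex.log (1 - q ^ (n + m + 1))‖
      ≤ ∑' n : ℕ, ‖Complex.log (1 - q ^ (n + m + 1))‖ :=
        norm_tsum_le_tsum_norm (summable_norm_log hq1 m)
    _ ≤ ∑' n : ℕ, (3/2) * ‖q‖ ^ (n + m + 1) := by
        apply Summable.tsum_le_tsum (fun n => by
          have h1 : ‖q ^ (n + m + 1)‖ ≤ 1/2 := by
            rw [norm_pow]
            calc ‖q‖ ^ (n+m+1) ≤ ‖q‖ ^ 1 := by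
                  apply pow_le_pow_of_le_one h0 (h.trans (by norm_num)) (by omega)
              _ ≤ 1/2 := by simpa using h
          simpa [norm_pow] using log_bound h1) (summable_norm_log hq1 m) (summable_geom_shift hq1 m)
    _ = (3/2) * ‖q‖ ^ (m + 1) * (1 - ‖q‖)⁻¹ := by
        rw [tsum_mul_left]
        rw [show (fun n : ℕ => ‖q‖ ^ (n + m + 1)) = (fun n : ℕ => ‖q‖ ^ (m+1) * ‖q‖ ^ n) from
          funext fun n => by rw [← pow_add]; ring_nf]
        rw [tsum_mul_left, tsum_geometric_of_lt_one h0 hq1]; ring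
    _ ≤ (3/2) * ‖q‖ ^ (m + 1) * 2 := by
        apply mul_le_mul_of_nonneg_left _ (by positivity)
        rw [inv_le_comm₀ (by linarith) (by norm_num)]; linarith
    _ ≤ 4 * ‖q‖ ^ (m + 1) := by nlinarith [pow_nonneg h0 (m+1)]





lemma exp_Lam {x : ℂ} (hx : ‖x‖ < 1) :
    Complex.exp (Lam x) = ∏' n : ℕ, (1 - x ^ (n + 1)) := by
  have this := Complex.cexp_tsum_eq_tprod (f := fun n : ℕ => 1 - x ^ (n + 1))
    (fun n => one_sub_ne (norm_pow_succ_lt hx n))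
    (by simpa using summable_log hx 0)
  simpa [Lam] using this

lemma lam_diff : DifferentiableOn ℂ Lam (ball (0:ℂ) 1) := by
  intro z hz
  rw [mem_ball_zero_iff] at hz
  obtain ⟨r, hr1, hr2⟩ : ∃ r : ℝ, ‖z‖ < r ∧ r < 1 := ⟨(‖z‖ + 1)/2, by linarith, by linarith⟩
  have hr0 : 0 ≤ r := (norm_nonneg z).trans hr1.le
  have hdiff : DifferentiableOn ℂ Lam (ball (0:ℂ) r) := by
    have := differentiableOn_tsum_of_summable_norm
      (u := fun n : ℕ => (1/(2*(1-r)) + 1) * r ^ (n + 1))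
      (F := fun (n : ℕ) (w : ℂ) => Complex.log (1 - w ^ (n + 1)))
      (U := ball (0:ℂ) r) ?_ ?_ isOpen_ball ?_
    · exact this.congr (fun w _ => rfl)
    · have : Summable (fun n : ℕ => r ^ n) := summable_geometric_of_lt_one hr0 hr2
      exact (((summable_nat_add_iff 1).2 this).mul_left _)
    · intro n
      intro w hw
      rw [mem_ball_zero_iff] at hw
      apply DifferentiableAt.differentiableWithinAt
      apply DifferentiableAt.clog
      · fun_prop
      · rw [mem_slitPlane_iff]
        left
        have hnorm : ‖w ^ (n+1)‖ < 1 := norm_pow_succ_lt (hw.trans hr2) n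
        have := Complex.abs_re_le_norm (w ^ (n+1))
        have h2 : |(w ^ (n+1)).re| < 1 := by
          calc |(w ^ (n+1)).re| ≤ ‖w ^ (n+1)‖ := Complex.abs_re_le_norm _
            _ < 1 := hnorm
        simp only [sub_re, one_re]
        cases abs_lt.mp h2; linarith
    · intro n w hw
      rw [mem_ball_zero_iff] at hw
      have hwr : ‖w ^ (n+1)‖ ≤ r ^ (n+1) := by
        rw [norm_pow]; exact pow_le_pow_left₀ (norm_nonneg w) hw.le _
      have hw1 : ‖w ^ (n+1)‖ < 1 := lt_of_le_of_lt hwr (pow_lt_one₀ hr0 hr2 (Nat.succ_ne_zero n))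
      calc ‖Complex.log (1 - w ^ (n+1))‖
          ≤ ‖w^(n+1)‖ ^ 2 * (1 - ‖w^(n+1)‖)⁻¹ / 2 + ‖w^(n+1)‖ := by
            have := Complex.norm_log_one_add_le (z := -(w ^ (n+1))) (by simpa using hw1)
            simpa [sub_eq_add_neg] using this
        _ ≤ (1/(2*(1-r)) + 1) * r ^ (n + 1) := by
            have h3 : ‖w^(n+1)‖ ≤ r^(n+1) := hwr
            have hrp : r^(n+1) < 1 := pow_lt_one₀ hr0 hr2 (Nat.succ_ne_zero n)
            have h4 : (1 - ‖w^(n+1)‖)⁻¹ ≤ (1 - r^(n+1))⁻¹ := by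
              apply inv_anti₀
              · linarith
              · linarith
            have h5 : (1 - r^(n+1))⁻¹ ≤ (1-r)⁻¹ := by
              apply inv_anti₀ (by linarith)
              have : r ^ (n+1) ≤ r ^ 1 := pow_le_pow_of_le_one hr0 hr2.le (by omega)
              simp at this; nlinarith
            have h6 : r ^ (n+1) ≤ 1 := (pow_le_one₀ hr0 hr2.le)
            have h7 : 0 ≤ ‖w ^ (n+1)‖ := norm_nonneg _
            have h8 : (0:ℝ) < 1 - r := by linarith
            calc ‖w^(n+1)‖ ^ 2 * (1 - ‖w^(n+1)‖)⁻¹ / 2 + ‖w^(n+1)‖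
                ≤ r^(n+1) * 1 * (1-r)⁻¹ / 2 + r^(n+1) := by
                  have := h4.trans h5
                  have h9 : ‖w^(n+1)‖^2 ≤ r^(n+1) * 1 := by nlinarith
                  have h10 : (0:ℝ) ≤ (1 - ‖w^(n+1)‖)⁻¹ := by
                    apply inv_nonneg.mpr; linarith
                  nlinarith [mul_le_mul h9 (h4.trans h5) h10 (by positivity : (0:ℝ) ≤ r^(n+1) * 1)]
              _ = (1/(2*(1-r)) + 1) * r ^ (n + 1) := by field_simp
  have : z ∈ ball (0:ℂ) r := mem_ball_zero_iff.mpr hr1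
  exact ((hdiff.differentiableAt (isOpen_ball.mem_nhds this)).differentiableWithinAt)

lemma FF_diff : DifferentiableOn ℂ FF (ball (0:ℂ) 1) := by
  intro z hz
  have hz1 : ‖z‖ < 1 := mem_ball_zero_iff.mp hz
  have hz9 : z ^ 9 ∈ ball (0:ℂ) 1 := by
    rw [mem_ball_zero_iff, norm_pow]
    exact pow_lt_one₀ (norm_nonneg z) hz1 (by norm_num)
  have h1 : DifferentiableAt ℂ Lam z := lam_diff.differentiableAt (isOpen_ball.mem_nhds hz)
  have h2 : DifferentiableAt ℂ Lam (z ^ 9) := lam_diff.differentiableAt (isOpen_ball.mem_nhds hz9)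
  have h3 : DifferentiableAt ℂ (fun x => Lam (x ^ 9)) z :=
    h2.comp (f := fun x : ℂ => x ^ 9) z (by fun_prop)
  exact ((((h1.const_mul 3).sub (h3.const_mul 3)).cexp)).differentiableWithinAt

lemma coeff_eq_of_tendsto {F : ℂ → ℂ} {p : FormalMultilinearSeries ℂ ℂ ℂ}
    (hp : HasFPowerSeriesAt F p 0) (k : ℕ) (c : ℂ)
    (h : Tendsto (fun q : ℂ => (F q - ∑ j ∈ Finset.range k, p.coeff j * q ^ j) / q ^ k)
      (𝓝[≠] 0) (𝓝 c)) : p.coeff k = c := by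
  -- value of iterates at 0
  have hval : ∀ m : ℕ, ((Function.swap dslope 0)^[m] F) 0 = p.coeff m := by
    intro m
    have hm := hp.has_fpower_series_iterate_dslope_fslope m
    have h0 := hm.coeff_zero 1
    have : (FormalMultilinearSeries.fslope^[m] p).coeff 0 = p.coeff m := by
      rw [FormalMultilinearSeries.coeff_iterate_fslope]; ring_nf
    rw [← this]
    exact (h0).symm
  -- formula for iterates away from 0
  have hform : ∀ m : ℕ, ∀ q : ℂ, q ≠ 0 →
      ((Function.swap dslope 0)^[m] F) q
        = (F q - ∑ j ∈ Finset.range m, p.coeff j * q ^ j) / q ^ m := by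
    intro m
    induction m with
    | zero => intro q hq; simp
    | succ m ih =>
      intro q hq
      rw [Function.iterate_succ_apply']
      have : (Function.swap dslope 0) ((Function.swap dslope 0)^[m] F) q
          = dslope ((Function.swap dslope 0)^[m] F) 0 q := rfl
      rw [this, dslope_of_ne _ hq, slope_def_field, ih q hq, hval m,
        Finset.sum_range_succ]
      field_simp
      ring
  -- continuity
  have hk := hp.has_fpower_series_iterate_dslope_fslope k
  have hcont : Tendsto ((Function.swap dslope 0)^[k] F) (𝓝[≠] 0) (𝓝 (p.coeff k)) := by
    have := hk.continuousAt.tendsto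
    rw [hval k] at this
    exact this.mono_left nhdsWithin_le_nhds
  have hcong : Tendsto ((Function.swap dslope 0)^[k] F) (𝓝[≠] 0) (𝓝 c) := by
    apply h.congr'
    filter_upwards [eventually_mem_nhdsWithin] with q hq
    exact (hform k q hq).symm
  exact tendsto_nhds_unique hcont hcong

lemma FF_series : ∃ p : FormalMultilinearSeries ℂ ℂ ℂ, HasFPowerSeriesAt FF p 0 ∧
    ∀ q : ℂ, ‖q‖ < 1 → HasSum (fun n => p.coeff n * q ^ n) (FF q) := by
  have hball : ∀ r : NNReal, (r:ℝ) < 1 → 0 < r →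
      HasFPowerSeriesOnBall FF (cauchyPowerSeries FF 0 r) 0 r := by
    intro r hr1 hr0
    apply DifferentiableOn.hasFPowerSeriesOnBall _ hr0
    apply FF_diff.mono
    intro x hx
    rw [mem_closedBall_zero_iff] at hx
    exact mem_ball_zero_iff.mpr (lt_of_le_of_lt hx hr1)
  set p := cauchyPowerSeries FF 0 (1/2 : NNReal) with hp
  have hpat : HasFPowerSeriesAt FF p 0 :=
    (hball (1/2) (by norm_num) (by norm_num)).hasFPowerSeriesAt
  refine ⟨p, hpat, fun q hq => ?_⟩
  have h0 : (0:ℝ) ≤ ‖q‖ := norm_nonneg q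
  set r : NNReal := ⟨(‖q‖ + 1)/2, by linarith⟩ with hr
  have hrc : (r : ℝ) = (‖q‖ + 1)/2 := rfl
  have hr1 : (r : ℝ) < 1 := by rw [hrc]; linarith
  have hr0 : 0 < r := by
    rw [← NNReal.coe_lt_coe, NNReal.coe_zero, hrc]; linarith
  have hball2 := hball r hr1 hr0
  have hqr : ‖q‖ < (r : ℝ) := by rw [hrc]; linarith
  have hmem : q ∈ Metric.eball (0:ℂ) r := by
    rw [Metric.eball_coe]
    exact mem_ball_zero_iff.mpr hqr
  have hsum := hball2.hasSum hmem
  have hpeq : cauchyPowerSeries FF 0 r = p :=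
    hball2.hasFPowerSeriesAt.eq_formalMultilinearSeries hpat
  rw [hpeq] at hsum
  simp only [zero_add] at hsum
  apply hsum.congr_fun fun n => ?_
  rw [FormalMultilinearSeries.apply_eq_pow_smul_coeff, smul_eq_mul]; ring

lemma FF_split {q : ℂ} (hq : ‖q‖ < 1) : FF q = AA q ^ 3 * Complex.exp (RR q) := by
  have hsum : Summable (fun n : ℕ => Complex.log (1 - q ^ (n + 1))) := by
    simpa using summable_log hq 0
  have hsplit : Lam q = (∑ n ∈ Finset.range 6, Complex.log (1 - q ^ (n + 1)))
      + ∑' n : ℕ, Complex.log (1 - q ^ (n + 6 + 1)) := by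
    rw [Lam, ← Summable.sum_add_tsum_nat_add 6 hsum]
  have hS : Complex.exp (∑ n ∈ Finset.range 6, Complex.log (1 - q ^ (n + 1))) = AA q := by
    rw [Complex.exp_sum]
    have hne : ∀ n ∈ Finset.range 6, Complex.exp (Complex.log (1 - q ^ (n+1))) = 1 - q^(n+1) :=
      fun n _ => Complex.exp_log (one_sub_ne (norm_pow_succ_lt hq n))
    rw [Finset.prod_congr rfl hne]
    simp [Finset.prod_range_succ, AA]
  have : 3 * Lam q - 3 * Lam (q ^ 9)
      = 3 * (∑ n ∈ Finset.range 6, Complex.log (1 - q ^ (n + 1))) + RR q := by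
    rw [hsplit, RR]; ring
  rw [FF, this, Complex.exp_add, ← hS, ← Complex.exp_nat_mul]
  norm_num

lemma FF_master : ∃ C : ℝ, 0 ≤ C ∧ ∀ q : ℂ, ‖q‖ ≤ 1/2 → ‖FF q - PP q‖ ≤ C * ‖q‖^7 := by
  obtain ⟨MA, hMA⟩ : ∃ M, ∀ x ∈ closedBall (0:ℂ) (1/2), ‖AA x ^ 3‖ ≤ M := by
    apply (isCompact_closedBall (0:ℂ) (1/2)).exists_bound_of_continuousOn
    apply Continuous.continuousOn
    unfold AA; fun_prop
  obtain ⟨MB, hMB⟩ : ∃ M, ∀ x ∈ closedBall (0:ℂ) (1/2), ‖BB x‖ ≤ M := by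
    apply (isCompact_closedBall (0:ℂ) (1/2)).exists_bound_of_continuousOn
    apply Continuous.continuousOn
    unfold BB; fun_prop
  have hMA0 : 0 ≤ MA := le_trans (norm_nonneg _) (hMA 0 (by simp))
  have hMB0 : 0 ≤ MB := le_trans (norm_nonneg _) (hMB 0 (by simp))
  refine ⟨MA * 48 + MB, by positivity, fun q hq => ?_⟩
  have hq1 : ‖q‖ < 1 := lt_of_le_of_lt hq (by norm_num)
  have h0 : 0 ≤ ‖q‖ := norm_nonneg q
  have hq9 : ‖q ^ 9‖ ≤ 1/2 := by
    rw [norm_pow]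
    calc ‖q‖^9 ≤ ‖q‖^1 := pow_le_pow_of_le_one h0 (hq.trans (by norm_num)) (by omega)
      _ ≤ 1/2 := by simpa using hq
  have hRR : ‖RR q‖ ≤ 24 * ‖q‖^7 := by
    have h1 : ‖∑' n : ℕ, Complex.log (1 - q ^ (n + 6 + 1))‖ ≤ 4 * ‖q‖^7 := tail_bound hq 6
    have h2 : ‖Lam (q^9)‖ ≤ 4 * ‖q^9‖^1 := by
      have := tail_bound hq9 0
      simpa [Lam] using this
    have h3 : ‖q^9‖^1 ≤ ‖q‖^7 := by
      rw [norm_pow, pow_one]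
      exact pow_le_pow_of_le_one h0 hq1.le (by omega)
    rw [RR]
    calc ‖3 * (∑' n : ℕ, Complex.log (1 - q ^ (n + 6 + 1))) - 3 * Lam (q ^ 9)‖
        ≤ ‖3 * (∑' n : ℕ, Complex.log (1 - q ^ (n + 6 + 1)))‖ + ‖3 * Lam (q ^ 9)‖ :=
          norm_sub_le _ _
      _ ≤ 3 * (4 * ‖q‖^7) + 3 * (4 * ‖q‖^7) := by
          rw [norm_mul, norm_mul]
          have h4 : ‖(3:ℂ)‖ = 3 := by norm_num
          rw [h4]
          have h5 : ‖Lam (q^9)‖ ≤ 4 * ‖q‖^7 := by nlinarith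
          have h6 : 0 ≤ ‖q‖^7 := by positivity
          nlinarith
      _ = 24 * ‖q‖^7 := by ring
  have hRR1 : ‖RR q‖ ≤ 1 := by
    have : ‖q‖^7 ≤ (1/2)^7 := pow_le_pow_left₀ h0 hq 7
    nlinarith
  have hexp : ‖Complex.exp (RR q) - 1‖ ≤ 48 * ‖q‖^7 := by
    have := Complex.norm_exp_sub_one_le (x := RR q) hRR1
    calc ‖Complex.exp (RR q) - 1‖ ≤ 2 * ‖RR q‖ := by
          exact this
      _ ≤ 48 * ‖q‖^7 := by linarith
  have hid : FF q - PP q = AA q ^ 3 * (Complex.exp (RR q) - 1) + q^7 * BB q := by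
    rw [FF_split hq1]
    linear_combination AA_cube q
  rw [hid]
  have hqmem : q ∈ closedBall (0:ℂ) (1/2) := by rwa [mem_closedBall_zero_iff]
  calc ‖AA q ^ 3 * (Complex.exp (RR q) - 1) + q^7 * BB q‖
      ≤ ‖AA q ^ 3‖ * ‖Complex.exp (RR q) - 1‖ + ‖q‖^7 * ‖BB q‖ := by
        refine le_trans (norm_add_le _ _) ?_
        rw [norm_mul, norm_mul]
        rw [show ‖q^7‖ = ‖q‖^7 from norm_pow q 7]
    _ ≤ MA * (48 * ‖q‖^7) + ‖q‖^7 * MB := by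
        have hA := hMA q hqmem
        have hB := hMB q hqmem
        have h7 : 0 ≤ ‖q‖^7 := by positivity
        have h8 : 0 ≤ ‖Complex.exp (RR q) - 1‖ := norm_nonneg _
        nlinarith [norm_nonneg (AA q ^ 3), norm_nonneg (BB q)]
    _ = (MA * 48 + MB) * ‖q‖^7 := by ring

lemma qq_norm_lt_one (z : ℍ) : ‖qq (z : ℂ)‖ < 1 := by
  rw [qq, Complex.norm_exp]
  have hre : (2 * (Real.pi:ℂ) * Complex.I * (z:ℂ)).re = -(2 * Real.pi * (z:ℂ).im) := by
    simp [Complex.mul_re, Complex.mul_im]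
  rw [hre, Real.exp_lt_one_iff]
  have h1 : 0 < (z:ℂ).im := z.2
  have := Real.pi_pos
  nlinarith

lemma qq_nat_mul (c : ℕ) (w : ℂ) : qq ((c:ℂ) * w) = qq w ^ c := by
  rw [qq, qq, ← Complex.exp_nat_mul]
  congr 1
  ring

lemma qq_ne_zero (w : ℂ) : qq w ≠ 0 := Complex.exp_ne_zero _

lemma psi9_eq (z : ℍ) : psi9 (z : ℂ) = (qq (z : ℂ))⁻¹ * FF (qq (z : ℂ)) := by
  set w : ℂ := (z : ℂ) with hw
  have hq1 : ‖qq w‖ < 1 := qq_norm_lt_one z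
  have hq9 : ‖qq w ^ 9‖ < 1 := by
    rw [norm_pow]
    exact pow_lt_one₀ (norm_nonneg _) hq1 (by norm_num)
  have heta1 : dedekindEta w = Complex.exp ((Real.pi:ℂ) * Complex.I * w / 12 + Lam (qq w)) := by
    rw [dedekindEta, Complex.exp_add]
    congr 1
    rw [exp_Lam hq1]
    refine tprod_congr fun n => ?_
    congr 1
    have : ((n:ℂ) + 1) * w = ((n + 1 : ℕ) : ℂ) * w := by push_cast; ring
    rw [this, qq_nat_mul]
  have heta9 : dedekindEta (9 * w)
      = Complex.exp ((Real.pi:ℂ) * Complex.I * (9 * w) / 12 + Lam (qq w ^ 9)) := by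
    rw [dedekindEta, Complex.exp_add]
    congr 1
    rw [exp_Lam hq9]
    refine tprod_congr fun n => ?_
    congr 1
    have h1 : ((n:ℂ) + 1) * (9 * w) = ((9 * (n + 1) : ℕ) : ℂ) * w := by push_cast; ring
    rw [h1, qq_nat_mul, pow_mul]
  rw [psi9, heta1, heta9, ← Complex.exp_nat_mul, ← Complex.exp_nat_mul, ← Complex.exp_sub, FF]
  rw [show (qq w)⁻¹ = Complex.exp (-(2 * (Real.pi:ℂ) * Complex.I * w)) by rw [qq, ← Complex.exp_neg]]
  rw [← Complex.exp_add]
  congr 1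
  push_cast
  ring

lemma tendsto_key (k : ℕ) (hk : k ≤ 6) (S g : ℂ → ℂ) (c : ℂ) (hg : Continuous g) (hg0 : g 0 = c)
    (hid : ∀ q : ℂ, q ≠ 0 → (PP q - S q) / q ^ k = g q) :
    Tendsto (fun q : ℂ => (FF q - S q) / q ^ k) (𝓝[≠] 0) (𝓝 c) := by
  obtain ⟨C, hC0, hC⟩ := FF_master
  have h1 : Tendsto (fun q : ℂ => (FF q - PP q) / q ^ k) (𝓝[≠] 0) (𝓝 0) := by
    apply squeeze_zero_norm'
      (a := fun q : ℂ => C * ‖q‖)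
    · have hev : ∀ᶠ q : ℂ in 𝓝[≠] 0, ‖q‖ ≤ 1/2 ∧ q ≠ 0 := by
        apply Filter.Eventually.and
        · apply Filter.Eventually.filter_mono nhdsWithin_le_nhds
          have : Metric.closedBall (0:ℂ) (1/2) ∈ 𝓝 (0:ℂ) :=
            Metric.closedBall_mem_nhds 0 (by norm_num)
          filter_upwards [this] with q hq
          rwa [mem_closedBall_zero_iff] at hq
        · exact eventually_mem_nhdsWithin
      filter_upwards [hev] with q ⟨hq2, hq0⟩
      have hqn : (0:ℝ) < ‖q‖ := norm_pos_iff.mpr hq0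
      rw [norm_div, norm_pow]
      rw [div_le_iff₀ (by positivity)]
      have h7 : ‖q‖ ^ 7 = ‖q‖ ^ (7 - k) * ‖q‖ ^ k := by
        rw [← pow_add]; congr 1; omega
      have hle : ‖q‖ ^ (7 - k) ≤ ‖q‖ := by
        calc ‖q‖ ^ (7-k) ≤ ‖q‖ ^ 1 :=
              pow_le_pow_of_le_one (norm_nonneg q) (hq2.trans (by norm_num)) (by omega)
          _ = ‖q‖ := pow_one _
      calc ‖FF q - PP q‖ ≤ C * ‖q‖^7 := hC q hq2
        _ = C * ‖q‖^(7-k) * ‖q‖^k := by rw [h7]; ring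
        _ ≤ C * ‖q‖ * ‖q‖^k := by
            have hk0 : (0:ℝ) ≤ ‖q‖^k := by positivity
            have := mul_le_mul_of_nonneg_left hle hC0
            nlinarith
    · have : Tendsto (fun q : ℂ => C * ‖q‖) (𝓝 0) (𝓝 (C * ‖(0:ℂ)‖)) :=
        (continuous_const.mul continuous_norm).tendsto 0
      simp only [norm_zero, mul_zero] at this
      exact this.mono_left nhdsWithin_le_nhds
  have h2 : Tendsto (fun q : ℂ => (PP q - S q) / q ^ k) (𝓝[≠] 0) (𝓝 c) := by
    have hgc : Tendsto g (𝓝[≠] 0) (𝓝 c) := by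
      rw [← hg0]
      exact (hg.tendsto 0).mono_left nhdsWithin_le_nhds
    apply hgc.congr'
    filter_upwards [eventually_mem_nhdsWithin] with q hq
    exact (hid q hq).symm
  have h3 := h1.add h2
  rw [zero_add] at h3
  apply h3.congr
  intro q
  rw [← add_div]
  congr 1
  ring

/-- `ψ⁹(z) = η(z)³/η(9z)³` has Fourier expansion beginning
`q⁻¹ - 3 + 5q² - 7q⁵ + ⋯`, with vanishing `q¹` coefficient. -/
theorem psi9_expansion : ∃ a : ℕ → ℂ, a 0 = 1 ∧ a 1 = -3 ∧ a 2 = 0 ∧ a 3 = 5 ∧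
    a 4 = 0 ∧ a 5 = 0 ∧ a 6 = -7 ∧
    ∀ z : ℍ, psi9 z = ∑' n : ℕ, a n * qq z ^ ((n : ℤ) - 1) := by
  obtain ⟨p, hp, hsum⟩ := FF_series
  have h0 : p.coeff 0 = 1 := by
    apply coeff_eq_of_tendsto hp 0 1 (tendsto_key 0 (by omega) _ PP 1 (by unfold PP; fun_prop)
      (by simp [PP]) ?_)
    intro q hq; simp [PP]
  have h1 : p.coeff 1 = -3 := by
    apply coeff_eq_of_tendsto hp 1 (-3) (tendsto_key 1 (by omega) _
      (fun q => -3 + 5*q^2 - 7*q^5) (-3) (by fun_prop) (by norm_num) ?_)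
    intro q hq
    simp only [Finset.sum_range_succ, Finset.sum_range_zero, h0]
    field_simp [PP]
    simp only [PP]
    ring
  have h2 : p.coeff 2 = 0 := by
    apply coeff_eq_of_tendsto hp 2 0 (tendsto_key 2 (by omega) _
      (fun q => 5*q - 7*q^4) 0 (by fun_prop) (by norm_num) ?_)
    intro q hq
    simp only [Finset.sum_range_succ, Finset.sum_range_zero, h0, h1]
    field_simp [PP]
    simp only [PP]
    ring
  have h3 : p.coeff 3 = 5 := by
    apply coeff_eq_of_tendsto hp 3 5 (tendsto_key 3 (by omega) _
      (fun q => 5 - 7*q^3) 5 (by fun_prop) (by norm_num) ?_)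
    intro q hq
    simp only [Finset.sum_range_succ, Finset.sum_range_zero, h0, h1, h2]
    field_simp [PP]
    simp only [PP]
    ring
  have h4 : p.coeff 4 = 0 := by
    apply coeff_eq_of_tendsto hp 4 0 (tendsto_key 4 (by omega) _
      (fun q => -7*q^2) 0 (by fun_prop) (by norm_num) ?_)
    intro q hq
    simp only [Finset.sum_range_succ, Finset.sum_range_zero, h0, h1, h2, h3]
    field_simp [PP]
    simp only [PP]
    ring
  have h5 : p.coeff 5 = 0 := by
    apply coeff_eq_of_tendsto hp 5 0 (tendsto_key 5 (by omega) _
      (fun q => -7*q) 0 (by fun_prop) (by norm_num) ?_)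
    intro q hq
    simp only [Finset.sum_range_succ, Finset.sum_range_zero, h0, h1, h2, h3, h4]
    field_simp [PP]
    simp only [PP]
    ring
  have h6 : p.coeff 6 = -7 := by
    apply coeff_eq_of_tendsto hp 6 (-7) (tendsto_key 6 (by omega) _
      (fun _ => -7) (-7) (by fun_prop) (by norm_num) ?_)
    intro q hq
    simp only [Finset.sum_range_succ, Finset.sum_range_zero, h0, h1, h2, h3, h4, h5]
    field_simp [PP]
    simp only [PP]
    ring
  refine ⟨fun n => p.coeff n, h0, h1, h2, h3, h4, h5, h6, fun z => ?_⟩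
  rw [psi9_eq z]
  have hq1 : ‖qq (z:ℂ)‖ < 1 := qq_norm_lt_one z
  have hne : qq (z:ℂ) ≠ 0 := qq_ne_zero _
  have hs := (hsum (qq (z:ℂ)) hq1).mul_left (qq (z:ℂ))⁻¹
  have heq : (fun n : ℕ => p.coeff n * qq (z:ℂ) ^ ((n:ℤ) - 1))
      = fun n : ℕ => (qq (z:ℂ))⁻¹ * (p.coeff n * qq (z:ℂ) ^ n) := by
    funext n
    rw [zpow_sub₀ hne, zpow_natCast, zpow_one]
    field_simp
  rw [heq]
  exact hs.tsum_eq.symm
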